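/- Let f : F_{q^n} → F_q be given by f(x) = Tr(H(x)) for some function H, and let α ∈ F_{q^n} be nonzero. Then the line αF_q = {αu : u ∈ F_q} is contained in P_H if and only if α is a 0-linear translator of f, i.e. f(x + uα) = f(x) for all x ∈ F_{q^n} and all u ∈ F_q. -/

import Mathlib

/-- The trace-like map `x ↦ ∑_{i<n} x^(q^i)` from `F_{q^n}` to `F_q`. -/
def fieldTrace (q n : ℕ) {F : Type*} [Field F] (x : F) : F :=
  ∑ i ∈ Finset.range n, x ^ q ^ i

theorem stmt_3 (p m n : ℕ) (hp : p.Prime) (hm : 0 < m) (hn : 0 < n)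
    (F : Type*) [Field F] [Fintype F] (hF : Fintype.card F = (p ^ m) ^ n)
    (H : F → F) (α : F) (hα : α ≠ 0) :
    (∀ u : F, u ^ p ^ m = u →
        Function.Bijective (fun x : F => x + (α * u) * fieldTrace (p ^ m) n (H x))) ↔
      (∀ x u : F, u ^ p ^ m = u →
        fieldTrace (p ^ m) n (H (x + u * α)) = fieldTrace (p ^ m) n (H x)) := by
  haveI : Fact p.Prime := ⟨hp⟩
  set q := p ^ m with hq
  -- characteristic of F is p
  obtain ⟨r, hr⟩ := CharP.exists F
  haveI := hr
  obtain ⟨k, hrp, hcard⟩ := FiniteField.card F r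
  have hpr : p = r := by
    have hdvd : p ∣ r ^ (k : ℕ) := by
      rw [← hcard, hF, ← pow_mul]
      exact dvd_pow_self p (by positivity)
    exact (Nat.prime_dvd_prime_iff_eq hp hrp).mp (hp.dvd_of_dvd_pow hdvd)
  subst hpr
  -- the iterated Frobenius
  set φ : F →+* F := iterateFrobenius F p m with hφdef
  have hφ : ∀ x : F, φ x = x ^ q := fun x => rfl
  -- x ^ q ^ n = x
  have hpow : ∀ z : F, z ^ q ^ n = z := by
    intro z
    rw [show q ^ n = Fintype.card F from hF.symm, FiniteField.pow_card]
  -- the trace lands in the subfield fixed by x ↦ x^q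
  have htr : ∀ y : F, (fieldTrace q n y) ^ q = fieldTrace q n y := by
    intro y
    have hsum : (∑ i ∈ Finset.range n, y ^ q ^ i) ^ q
        = ∑ i ∈ Finset.range n, (y ^ q ^ i) ^ q := by
      simpa [hφ] using map_sum φ (fun i => y ^ q ^ i) (Finset.range n)
    have hstep : ∀ i : ℕ, (y ^ q ^ i) ^ q = y ^ q ^ (i + 1) := by
      intro i; rw [← pow_mul, ← pow_succ]
    have h1 : ∑ i ∈ Finset.range (n + 1), y ^ q ^ i
        = (∑ i ∈ Finset.range n, y ^ q ^ (i + 1)) + y ^ q ^ 0 :=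
      Finset.sum_range_succ' _ n
    have h2 : ∑ i ∈ Finset.range (n + 1), y ^ q ^ i
        = (∑ i ∈ Finset.range n, y ^ q ^ i) + y ^ q ^ n :=
      Finset.sum_range_succ _ n
    unfold fieldTrace
    rw [hsum]
    simp only [hstep]
    have := h1.symm.trans h2
    rw [hpow y, pow_zero, pow_one] at this
    linear_combination this
  constructor
  · -- bijective for all lines ⟹ 0-translator
    intro h x u hu
    by_cases hu0 : u = 0
    · simp [hu0]
    by_contra hne
    set a := fieldTrace q n (H x) with ha
    set b := fieldTrace q n (H (x + u * α)) with hb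
    have hδ : b - a ≠ 0 := sub_ne_zero.mpr hne
    set v : F := -(u / (b - a)) with hv
    have haq : a ^ q = a := htr (H x)
    have hbq : b ^ q = b := htr (H (x + u * α))
    have hδq : (b - a) ^ q = b - a := by
      have h1 : (b - a) ^ q = b ^ q - a ^ q := by
        simpa [hφ] using map_sub φ b a
      rw [h1, haq, hbq]
    have hvq : v ^ q = v := by
      have h1 : φ (-(u / (b - a))) = -(u / (b - a)) := by
        rw [map_neg, map_div₀, hφ, hφ, hu, hδq]
      rw [hv]
      simpa [hφ] using h1
    have hbij := h v hvq
    have hkey : u + v * (b - a) = 0 := by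
      rw [hv]; field_simp; ring
    have himg : (x + u * α) + (α * v) * fieldTrace q n (H (x + u * α))
        = x + (α * v) * fieldTrace q n (H x) := by
      rw [← hb, ← ha]
      linear_combination α * hkey
    have h2 := hbij.injective himg
    have : u * α = 0 := by linear_combination h2
    exact hu0 (by
      rcases mul_eq_zero.mp this with h' | h'
      · exact h'
      · exact absurd h' hα)
  · -- 0-translator ⟹ bijective for all lines
    intro h u hu
    rw [← Finite.injective_iff_bijective]
    intro x y hxy
    simp only at hxy
    set c : F := u * (fieldTrace q n (H y) - fieldTrace q n (H x)) with hc
    have hcq : c ^ q = c := by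
      have : φ c = c := by
        rw [hc, map_mul, map_sub, hφ u, hu, hφ, hφ, htr, htr]
      simpa [hφ] using this
    have hx' : x = y + c * α := by
      rw [hc]; linear_combination hxy
    have hTr : fieldTrace q n (H x) = fieldTrace q n (H y) := by
      rw [hx']; exact h y c hcq
    rw [hTr] at hxy
    linear_combination hxy
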